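/- Let X = x₁ + ... + x_s where x₁, ..., x_s are k-wise independent {0,1}-valued random variables, let μ = E[X], and suppose δ ≥ 1 and k ≥ ⌈μδ⌉. Then Pr[X ≥ (1+δ)μ] ≤ e^{−μδ/3}. -/

import Mathlib

open MeasureTheory ProbabilityTheory

lemma aux_pow_bound (x y : ℝ) (hx : 0 ≤ x) (hy : 0 ≤ y) :
    ∀ n : ℕ, x ^ (n+1) + (n+1) * y * x ^ n ≤ (x + y) ^ (n+1) := by
  intro n
  induction n with
  | zero => norm_num
  | succ n ih =>
    have hxn : 0 ≤ x ^ n := pow_nonneg hx n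
    have h2 : (x + y) * (x^(n+1) + ((n:ℝ)+1) * y * x^n) ≤ (x+y) * (x+y)^(n+1) :=
      mul_le_mul_of_nonneg_left (by push_cast at ih ⊢; linarith) (by linarith)
    push_cast
    rw [pow_succ x (n+1), pow_succ (x+y) (n+1)] at *
    rw [pow_succ x n] at *
    nlinarith [mul_nonneg (mul_nonneg (by positivity : (0:ℝ) ≤ (n:ℝ)+1)
      (mul_nonneg hy hy)) hxn]

lemma aux_esymm {ι : Type*} [DecidableEq ι] (p : ι → ℝ) (hp : ∀ i, 0 ≤ p i) (A : Finset ι) :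
    ∀ r : ℕ, (r.factorial : ℝ) * ∑ T ∈ A.powersetCard r, ∏ i ∈ T, p i ≤ (∑ i ∈ A, p i) ^ r := by
  induction A using Finset.induction with
  | empty =>
    intro r
    cases r with
    | zero => simp
    | succ n =>
      rw [Finset.powersetCard_eq_empty.2 (by simp)]
      simp
  | @insert a A ha ih =>
    intro r
    cases r with
    | zero => simp
    | succ n =>
      rw [Finset.powersetCard_succ_insert ha, Finset.sum_union, Finset.sum_image]
      · have hS : 0 ≤ ∑ i ∈ A, p i := Finset.sum_nonneg fun i _ => hp i
        have key : ∀ T ∈ A.powersetCard n, ∏ i ∈ insert a T, p i = p a * ∏ i ∈ T, p i := by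
          intro T hT
          rw [Finset.prod_insert (fun h => ha ((Finset.mem_powersetCard.1 hT).1 h))]
        rw [Finset.sum_congr rfl key, ← Finset.mul_sum, Finset.sum_insert ha]
        have ih1 := ih (n+1)
        have ih2 := ih n
        have hfac : ((n+1).factorial : ℝ) = ((n:ℝ)+1) * n.factorial := by
          push_cast [Nat.factorial_succ]; ring
        have hb := aux_pow_bound (∑ i ∈ A, p i) (p a) hS (hp a) n
        have hmul := mul_le_mul_of_nonneg_left ih2
          (mul_nonneg (by positivity : (0:ℝ) ≤ (n:ℝ)+1) (hp a))
        have hsplit : ((n+1).factorial : ℝ) *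
            ((∑ T ∈ A.powersetCard (n+1), ∏ i ∈ T, p i)
              + p a * ∑ T ∈ A.powersetCard n, ∏ i ∈ T, p i)
            = ((n+1).factorial : ℝ) * (∑ T ∈ A.powersetCard (n+1), ∏ i ∈ T, p i)
              + ((n:ℝ)+1) * p a * ((n.factorial : ℝ) * ∑ T ∈ A.powersetCard n, ∏ i ∈ T, p i) := by
          rw [hfac]; ring
        have hb' : (∑ i ∈ A, p i) ^ (n+1) + ((n:ℝ)+1) * p a * (∑ i ∈ A, p i) ^ n
            ≤ (p a + ∑ i ∈ A, p i) ^ (n+1) := by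
          rw [add_comm (p a)]; push_cast at hb; linarith
        simp only [Nat.succ_eq_add_one]
        rw [hsplit]
        have := hmul
        linarith
      · intro T hT T' hT' hEq
        have haT : a ∉ T := fun h => ha ((Finset.mem_powersetCard.1 hT).1 h)
        have haT' : a ∉ T' := fun h => ha ((Finset.mem_powersetCard.1 hT').1 h)
        rw [← Finset.erase_insert haT, ← Finset.erase_insert haT', hEq]
      · rw [Finset.disjoint_right]
        intro T hT hT'
        obtain ⟨T', _, rfl⟩ := Finset.mem_image.1 hT
        exact ha ((Finset.mem_powersetCard.1 hT').1 (Finset.mem_insert_self a T'))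

lemma aux_int_prod {Ω ι : Type*} [MeasurableSpace Ω] {μ : Measure Ω} [IsProbabilityMeasure μ]
    [DecidableEq ι]
    (g : ι → Ω → ℝ) (hmeas : ∀ i, Measurable (g i)) (hpos : ∀ i ω, 0 ≤ g i ω)
    (hind : iIndepFun (m := fun _ : ι => (inferInstance : MeasurableSpace ℝ)) g μ)
    (t : Finset ι) : ∫ ω, ∏ i ∈ t, g i ω ∂μ = ∏ i ∈ t, ∫ ω, g i ω ∂μ := by
  induction t using Finset.induction with
  | empty => simp
  | @insert a t' ha ih =>
    have hprodmeas : Measurable (∏ j ∈ t', g j) := by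
      rw [show (∏ j ∈ t', g j) = fun ω => ∏ j ∈ t', g j ω from funext fun ω => by
        simp [Finset.prod_apply]]
      exact Finset.measurable_prod t' fun i _ => hmeas i
    have hIF : IndepFun (∏ j ∈ t', g j) (g a) μ :=
      hind.indepFun_finsetProd_of_notMem hmeas ha
    have hmul := hIF.symm.integral_mul_eq_mul_integral
      (hmeas a).aestronglyMeasurable hprodmeas.aestronglyMeasurable
    rw [Finset.prod_insert ha, ← ih]
    calc ∫ ω, ∏ i ∈ insert a t', g i ω ∂μ
        = ∫ ω, (g a * ∏ j ∈ t', g j) ω ∂μ := by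
          congr 1; ext ω; simp [Finset.prod_apply, Finset.prod_insert ha]
      _ = (∫ ω, g a ω ∂μ) * ∫ ω, (∏ j ∈ t', g j) ω ∂μ := hmul
      _ = (∫ ω, g a ω ∂μ) * ∫ ω, ∏ j ∈ t', g j ω ∂μ := by
          congr 1; apply integral_congr_ae; filter_upwards with ω
          simp [Finset.prod_apply]

lemma aux_exp_le (u : ℝ) (h0 : 0 ≤ u) (h1 : u ≤ 1) :
    Real.exp (Real.log 2 * u) ≤ 1 + u := by
  have h := convexOn_exp.2 (Set.mem_univ (0:ℝ)) (Set.mem_univ (Real.log 2))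
    (by linarith : (0:ℝ) ≤ 1 - u) h0 (by ring)
  simp only [smul_eq_mul, mul_zero, zero_add, Real.exp_zero,
    Real.exp_log two_pos] at h
  calc Real.exp (Real.log 2 * u) = Real.exp (u * Real.log 2) := by rw [mul_comm]
    _ ≤ (1 - u) * 1 + u * 2 := h
    _ = 1 + u := by ring


lemma aux_numeric (μX δ q : ℝ) (r N : ℕ) (hδ : 1 ≤ δ) (hμpos : 0 < μX) (hq : q = μX * δ)
    (hqr : q ≤ r) (hrq : (r : ℝ) < q + 1) (hNge : (1 + δ) * μX ≤ (N : ℝ)) (hr1 : 1 ≤ r) :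
    μX ^ r * Real.exp (q / 3) ≤ ∏ j ∈ Finset.range r, ((N : ℝ) - (j : ℝ)) := by
  have hδ0 : 0 < δ := lt_of_lt_of_le one_pos hδ
  have hqpos : 0 < q := hq ▸ mul_pos hμpos hδ0
  have hμq : μX ≤ q := by rw [hq]; nlinarith
  have hfactor : ∀ j ∈ Finset.range r,
      μX * Real.exp (Real.log 2 * ((q - j) / q)) ≤ (N : ℝ) - (j : ℝ) := by
    intro j hj
    have hjr : (j : ℝ) ≤ (r : ℝ) - 1 := by
      have := Finset.mem_range.1 hj
      have : (j : ℝ) + 1 ≤ (r : ℝ) := by exact_mod_cast this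
      linarith
    have hjq : (j : ℝ) ≤ q := by linarith
    have hu0 : 0 ≤ (q - j) / q := div_nonneg (by linarith) hqpos.le
    have hu1 : (q - j) / q ≤ 1 := by
      rw [div_le_one hqpos]; have : (0:ℝ) ≤ j := Nat.cast_nonneg j; linarith
    have hexp := aux_exp_le ((q - j) / q) hu0 hu1
    have h2 : μX * (1 + (q - j) / q) ≤ (N : ℝ) - (j : ℝ) := by
      have hμu : μX * ((q - j) / q) ≤ q - (j:ℝ) := by
        have hqq : q * ((q - j) / q) = q - (j:ℝ) := by field_simp
        nlinarith [mul_le_mul_of_nonneg_right hμq hu0]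
      nlinarith
    calc μX * Real.exp (Real.log 2 * ((q - j) / q)) ≤ μX * (1 + (q - j) / q) := by
          nlinarith
      _ ≤ (N : ℝ) - (j : ℝ) := h2
  have hsumu : q / 2 ≤ ∑ j ∈ Finset.range r, (q - (j:ℝ)) / q := by
    have hsumj : ∑ j ∈ Finset.range r, (j : ℝ) = (r : ℝ) * ((r : ℝ) - 1) / 2 := by
      have h := congrArg (fun n : ℕ => (n : ℝ)) (Finset.sum_range_id_mul_two r)
      push_cast [Nat.cast_sub hr1] at h
      linarith
    have : ∑ j ∈ Finset.range r, (q - (j:ℝ)) / q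
        = ((r:ℝ) * q - (r : ℝ) * ((r : ℝ) - 1) / 2) / q := by
      rw [← Finset.sum_div]
      congr 1
      rw [Finset.sum_sub_distrib, Finset.sum_const, Finset.card_range, hsumj]
      push_cast; ring
    rw [this, le_div_iff₀ hqpos]
    have hr1' : (1:ℝ) ≤ r := by exact_mod_cast hr1
    nlinarith
  have hlog2 : (2:ℝ)/3 ≤ Real.log 2 := le_of_lt (by
    calc (2:ℝ)/3 < 0.6931471803 := by norm_num
      _ < Real.log 2 := Real.log_two_gt_d9)
  have hprodge : μX ^ r * Real.exp (q / 3) ≤ ∏ j ∈ Finset.range r, ((N : ℝ) - (j : ℝ)) := by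
    calc μX ^ r * Real.exp (q / 3)
        ≤ μX ^ r * Real.exp (Real.log 2 * ∑ j ∈ Finset.range r, (q - (j:ℝ)) / q) := by
          refine mul_le_mul_of_nonneg_left (Real.exp_le_exp.2 ?_) (pow_nonneg hμpos.le r)
          nlinarith
      _ = ∏ j ∈ Finset.range r, (μX * Real.exp (Real.log 2 * ((q - (j:ℝ)) / q))) := by
          rw [Finset.prod_mul_distrib, Finset.prod_const, Finset.card_range,
            ← Real.exp_sum, ← Finset.mul_sum]
      _ ≤ ∏ j ∈ Finset.range r, ((N : ℝ) - (j : ℝ)) := by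
          refine Finset.prod_le_prod (fun j _ => ?_) hfactor
          positivity
  exact hprodge

/-- Schmidt–Siegel–Srinivasan tail bound with limited independence, regime `δ ≥ 1`:
if `X = x₁ + ... + x_s` where the `x_i` are `k`-wise independent `{0,1}`-valued
random variables, `μ = E[X]`, `δ ≥ 1` and `k ≥ ⌈μδ⌉`, then
`Pr[X ≥ (1+δ)μ] ≤ e^{−μδ/3}`. -/
theorem stmt9 {Ω : Type*} [MeasurableSpace Ω] (μ : Measure Ω) [IsProbabilityMeasure μ]
    (s k : ℕ) (x : Fin s → Ω → ℝ)
    (hmeas : ∀ i, Measurable (x i))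
    (h01 : ∀ i ω, x i ω = 0 ∨ x i ω = 1)
    (hkwise : ∀ t : Finset (Fin s), t.card ≤ k →
      iIndepFun (m := fun _ : t => (inferInstance : MeasurableSpace ℝ))
        (fun i : t => x i) μ)
    (δ : ℝ) (hδ : 1 ≤ δ)
    (μX : ℝ) (hμX : μX = ∫ ω, (∑ i, x i ω) ∂μ)
    (hk : ⌈μX * δ⌉₊ ≤ k) :
    (μ {ω | (1 + δ) * μX ≤ ∑ i, x i ω}).toReal ≤ Real.exp (-(μX * δ) / 3) := by
  classical
  have hx0 : ∀ i ω, 0 ≤ x i ω := fun i ω => by rcases h01 i ω with h | h <;> simp [h]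
  have hx1 : ∀ i ω, x i ω ≤ 1 := fun i ω => by rcases h01 i ω with h | h <;> simp [h]
  have hxint : ∀ i, Integrable (x i) μ := by
    intro i
    refine (integrable_const (1:ℝ)).mono' (hmeas i).aestronglyMeasurable ?_
    filter_upwards with ω
    rw [Real.norm_eq_abs, abs_of_nonneg (hx0 i ω)]; exact hx1 i ω
  have hμX0 : 0 ≤ μX := by
    rw [hμX]; exact integral_nonneg fun ω => Finset.sum_nonneg fun i _ => hx0 i ω
  set E : Set Ω := {ω | (1 + δ) * μX ≤ ∑ i, x i ω} with hE
  have hPr1 : (μ E).toReal ≤ 1 := by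
    have := ENNReal.toReal_mono ENNReal.one_ne_top (prob_le_one (μ := μ) (s := E))
    simpa using this
  have hPr0 : 0 ≤ (μ E).toReal := ENNReal.toReal_nonneg
  rcases eq_or_lt_of_le hμX0 with hμ0 | hμpos
  · rw [← hμ0]
    simpa using hPr1
  obtain ⟨q, hq⟩ : ∃ q : ℝ, q = μX * δ := ⟨_, rfl⟩
  have hδ0 : 0 < δ := lt_of_lt_of_le one_pos hδ
  have hqpos : 0 < q := hq ▸ mul_pos hμpos hδ0
  have hμq : μX ≤ q := by
    rw [hq]; nlinarith
  obtain ⟨r, hrdef⟩ : ∃ r : ℕ, r = ⌈q⌉₊ := ⟨_, rfl⟩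
  obtain ⟨N, hNdef⟩ : ∃ N : ℕ, N = ⌈(1 + δ) * μX⌉₊ := ⟨_, rfl⟩
  have hrk : r ≤ k := by rw [hrdef, hq]; exact hk
  have hr1 : 1 ≤ r := hrdef ▸ Nat.one_le_iff_ne_zero.2 (by
    simp only [ne_eq, Nat.ceil_eq_zero, not_le]; exact hqpos)
  have hqr : q ≤ r := hrdef ▸ Nat.le_ceil q
  have hrq : (r : ℝ) < q + 1 := hrdef ▸ Nat.ceil_lt_add_one hqpos.le
  have hNge : (1 + δ) * μX ≤ (N : ℝ) := hNdef ▸ Nat.le_ceil _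
  have hqN : q ≤ (1 + δ) * μX := by nlinarith
  have hNr : r ≤ N := by rw [hrdef, hNdef]; exact Nat.ceil_le_ceil hqN
  -- expectations
  set p : Fin s → ℝ := fun i => ∫ ω, x i ω ∂μ with hpdef
  have hp0 : ∀ i, 0 ≤ p i := fun i => integral_nonneg (hx0 i)
  have hpsum : ∑ i, p i = μX := by
    rw [hμX, integral_finset_sum _ fun i _ => hxint i]
  -- the symmetric function
  set S : Ω → ℝ := fun ω => ∑ T ∈ Finset.powersetCard r (Finset.univ : Finset (Fin s)),
    ∏ i ∈ T, x i ω with hSdef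
  have hprodmeas : ∀ T : Finset (Fin s), Measurable fun ω => ∏ i ∈ T, x i ω :=
    fun T => Finset.measurable_prod _ fun i _ => hmeas i
  have hprod0 : ∀ (T : Finset (Fin s)) ω, 0 ≤ ∏ i ∈ T, x i ω :=
    fun T ω => Finset.prod_nonneg fun i _ => hx0 i ω
  have hprod1 : ∀ (T : Finset (Fin s)) ω, ∏ i ∈ T, x i ω ≤ 1 :=
    fun T ω => Finset.prod_le_one (fun i _ => hx0 i ω) (fun i _ => hx1 i ω)
  have hprodint : ∀ T : Finset (Fin s), Integrable (fun ω => ∏ i ∈ T, x i ω) μ := by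
    intro T
    refine (integrable_const (1:ℝ)).mono' (hprodmeas T).aestronglyMeasurable ?_
    filter_upwards with ω
    rw [Real.norm_eq_abs, abs_of_nonneg (hprod0 T ω)]; exact hprod1 T ω
  have hSnonneg : ∀ ω, 0 ≤ S ω := fun ω => Finset.sum_nonneg fun T _ => hprod0 T ω
  have hSint : Integrable S μ := integrable_finset_sum _ fun T _ => hprodint T
  -- E[S] factorizes
  have hES : ∫ ω, S ω ∂μ
      = ∑ T ∈ Finset.powersetCard r (Finset.univ : Finset (Fin s)), ∏ i ∈ T, p i := by
    rw [hSdef, integral_finset_sum _ fun T _ => hprodint T]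
    refine Finset.sum_congr rfl fun T hT => ?_
    have hTcard : T.card ≤ k := by
      rw [(Finset.mem_powersetCard.1 hT).2]; exact hrk
    have hind := hkwise T hTcard
    have haux := aux_int_prod (fun i : T => x i) (fun i => hmeas i)
      (fun i ω => hx0 i ω) hind Finset.univ
    calc ∫ ω, ∏ i ∈ T, x i ω ∂μ
        = ∫ ω, ∏ i : T, x (↑i) ω ∂μ := by
          congr 1; ext ω; exact (Finset.prod_coe_sort T fun i => x i ω).symm
      _ = ∏ i : T, ∫ ω, x (↑i) ω ∂μ := haux
      _ = ∏ i ∈ T, p i := Finset.prod_coe_sort T fun i => p i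
  -- moment bound
  have hesymm : (r.factorial : ℝ) * ∫ ω, S ω ∂μ ≤ μX ^ r := by
    rw [hES, ← hpsum]
    exact aux_esymm p hp0 Finset.univ r
  -- pointwise lower bound on the event
  have hpoint : ∀ ω, ω ∈ E → (N.choose r : ℝ) ≤ S ω := by
    intro ω hω
    set A : Finset (Fin s) := Finset.univ.filter (fun i => x i ω = 1) with hA
    have hXA : ∑ i, x i ω = (A.card : ℝ) := by
      rw [hA, ← Finset.sum_boole]
      refine Finset.sum_congr rfl fun i _ => ?_
      rcases h01 i ω with h | h <;> simp [h]
    have hNA : N ≤ A.card := by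
      rw [hNdef, Nat.ceil_le]
      calc (1 + δ) * μX ≤ ∑ i, x i ω := hω
        _ = (A.card : ℝ) := hXA
    have hSval : S ω = ((A.card.choose r : ℕ) : ℝ) := by
      show (∑ T ∈ Finset.powersetCard r (Finset.univ : Finset (Fin s)), ∏ i ∈ T, x i ω)
        = ((A.card.choose r : ℕ) : ℝ)
      have : ∀ T ∈ Finset.powersetCard r (Finset.univ : Finset (Fin s)),
          ∏ i ∈ T, x i ω = if T ⊆ A then 1 else 0 := by
        intro T _
        by_cases hTA : T ⊆ A
        · rw [if_pos hTA]
          refine Finset.prod_eq_one fun i hi => ?_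
          have := hTA hi
          rw [hA, Finset.mem_filter] at this
          exact this.2
        · rw [if_neg hTA]
          obtain ⟨i, hiT, hiA⟩ := Finset.not_subset.1 hTA
          refine Finset.prod_eq_zero hiT ?_
          rcases h01 i ω with h | h
          · exact h
          · exact absurd (by rw [hA, Finset.mem_filter]; exact ⟨Finset.mem_univ i, h⟩) hiA
      rw [Finset.sum_congr rfl this, Finset.sum_boole]
      have hfilter : (Finset.powersetCard r (Finset.univ : Finset (Fin s))).filter
          (fun T => T ⊆ A) = Finset.powersetCard r A := by
        ext T
        simp only [Finset.mem_filter, Finset.mem_powersetCard]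
        constructor
        · rintro ⟨⟨-, hcard⟩, hsub⟩; exact ⟨hsub, hcard⟩
        · rintro ⟨hsub, hcard⟩; exact ⟨⟨Finset.subset_univ T, hcard⟩, hsub⟩
      rw [hfilter, Finset.card_powersetCard]
    rw [hSval]
    exact_mod_cast Nat.choose_le_choose r hNA
  -- Markov
  have hmarkov := mul_meas_ge_le_integral_of_nonneg (ae_of_all μ hSnonneg) hSint
    ((N.choose r : ℕ) : ℝ)
  have hsub : E ⊆ {ω | ((N.choose r : ℕ) : ℝ) ≤ S ω} := fun ω hω => hpoint ω hω
  have hmono : (μ E).toReal ≤ (μ {ω | ((N.choose r : ℕ) : ℝ) ≤ S ω}).toReal :=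
    ENNReal.toReal_mono (measure_ne_top μ _) (measure_mono hsub)
  have hC : (0:ℝ) < (N.choose r : ℕ) := by exact_mod_cast Nat.choose_pos hNr
  have key1 : (r.factorial : ℝ) * ((N.choose r : ℕ) : ℝ) * (μ E).toReal ≤ μX ^ r := by
    have h1 : ((N.choose r : ℕ) : ℝ) * (μ E).toReal ≤ ∫ ω, S ω ∂μ :=
      le_trans (by rw [measureReal_def]; nlinarith) hmarkov
    have hfpos : (0:ℝ) < r.factorial := by exact_mod_cast r.factorial_pos
    calc (r.factorial : ℝ) * ((N.choose r : ℕ) : ℝ) * (μ E).toReal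
        = (r.factorial : ℝ) * (((N.choose r : ℕ) : ℝ) * (μ E).toReal) := by ring
      _ ≤ (r.factorial : ℝ) * ∫ ω, S ω ∂μ := by nlinarith
      _ ≤ μX ^ r := hesymm
  -- descending factorial
  have hdesc : (r.factorial : ℝ) * ((N.choose r : ℕ) : ℝ)
      = ∏ j ∈ Finset.range r, ((N : ℝ) - (j : ℝ)) := by
    rw [← Nat.cast_mul, ← Nat.descFactorial_eq_factorial_mul_choose,
      Nat.descFactorial_eq_prod_range, Nat.cast_prod]
    refine Finset.prod_congr rfl fun j hj => ?_
    have hjN : j ≤ N := le_trans (le_of_lt (Finset.mem_range.1 hj)) hNr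
    push_cast [Nat.cast_sub hjN]
    ring
  have hprodge := aux_numeric μX δ q r N hδ hμpos hq hqr hrq hNge hr1
  -- conclude
  have hfinal : (μ E).toReal * Real.exp (q / 3) ≤ 1 := by
    have h3 : μX ^ r * Real.exp (q / 3) * (μ E).toReal ≤ μX ^ r := by
      calc μX ^ r * Real.exp (q / 3) * (μ E).toReal
          ≤ (∏ j ∈ Finset.range r, ((N : ℝ) - (j : ℝ))) * (μ E).toReal := by
            exact mul_le_mul_of_nonneg_right hprodge hPr0
        _ = (r.factorial : ℝ) * ((N.choose r : ℕ) : ℝ) * (μ E).toReal := by rw [hdesc]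
        _ ≤ μX ^ r := key1
    have hpow : (0:ℝ) < μX ^ r := pow_pos hμpos r
    nlinarith [Real.exp_pos (q/3)]
  have hexp3 : Real.exp (-(μX * δ) / 3) = (Real.exp (q / 3))⁻¹ := by
    rw [← Real.exp_neg]; congr 1; rw [hq]; ring
  have he : (0:ℝ) < Real.exp (q / 3) := Real.exp_pos _
  calc (μ E).toReal ≤ (Real.exp (q / 3))⁻¹ := by
        rw [← one_div, le_div_iff₀ he]; exact hfinal
    _ = Real.exp (-(μX * δ) / 3) := by
        rw [← Real.exp_neg]; congr 1; rw [hq]; ring
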